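/- arXiv:2204.01395 — 3 statements merged into one kernel-verified Lean document; each statement's English description precedes it below -/
import Mathlib

section
/- Let s be a strategy profile of a parking instance that satisfies the greedy-by-resilience invariant (the invariant maintained by Algorithm 1). Then s is a Nash equilibrium: for every agent i and every o : Option (Fin m), c i s ≤ c i (Function.update s i o). -/
open Classical in
/-- The cost of agent `i` under profile `s`. -/
noncomputable def cost {n m : ℕ} (t : Fin n → ℝ) (r : Fin m → ℝ) (f : Fin n → ℝ)
    (i : Fin n) (s : Fin n → Option (Fin m)) : WithTop ℝ :=
  match s i with
  | none => ⊤
  | some j =>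
    if t i - r j ≥ 0 ∧ ¬ ∃ k, k ≠ i ∧ f k < f i ∧ s k = some j ∧ t k - r j ≥ 0
    then ((f i * (t i - r j) : ℝ) : WithTop ℝ)
    else ⊤

/-- `Feas t r f i s` is the set `F i s` of slots agent `i` can feasibly reach
that are not chosen by any agent of strictly lower resilience. -/
def Feas {n m : ℕ} (t : Fin n → ℝ) (r : Fin m → ℝ) (f : Fin n → ℝ)
    (i : Fin n) (s : Fin n → Option (Fin m)) : Set (Fin m) :=
  { j | t i - r j ≥ 0 ∧ ∀ k, f k < f i → s k ≠ some j }

/-- The greedy-by-resilience invariant maintained by Algorithm 1. -/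
def GreedyInv {n m : ℕ} (t : Fin n → ℝ) (r : Fin m → ℝ) (f : Fin n → ℝ)
    (s : Fin n → Option (Fin m)) : Prop :=
  ∀ i : Fin n,
    ((Feas t r f i s).Nonempty →
      ∃ j ∈ Feas t r f i s, s i = some j ∧
        ∀ j' ∈ Feas t r f i s, f i * (t i - r j) ≤ f i * (t i - r j')) ∧
    (Feas t r f i s = ∅ → s i = none)

/-- Nash equilibrium: no agent can improve by a unilateral deviation. -/
def NashEq {n m : ℕ} (t : Fin n → ℝ) (r : Fin m → ℝ) (f : Fin n → ℝ)
    (s : Fin n → Option (Fin m)) : Prop :=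
  ∀ (i : Fin n) (o : Option (Fin m)),
    cost t r f i s ≤ cost t r f i (Function.update s i o)

/-- a profile satisfying the greedy-by-resilience invariant is a
Nash equilibrium. -/
theorem greedyInv_isNashEq {n m : ℕ} (t : Fin n → ℝ) (r : Fin m → ℝ) (f : Fin n → ℝ)
    (hf_inj : Function.Injective f) (hf_bd : ∀ i, 0 ≤ f i ∧ f i ≤ 1)
    (s : Fin n → Option (Fin m)) (hs : GreedyInv t r f s) :
    ∀ (i : Fin n) (o : Option (Fin m)),
      cost t r f i s ≤ cost t r f i (Function.update s i o) := by
  have hassign : ∀ k j, s k = some j → t k - r j ≥ 0 := by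
    intro k j hk
    rcases hs k with ⟨h1, h2⟩
    rcases Set.eq_empty_or_nonempty (Feas t r f k s) with he | hne
    · simp [h2 he] at hk
    · rcases h1 hne with ⟨j', hj', hk', _⟩
      rw [hk] at hk'
      cases Option.some.inj hk'
      exact hj'.1
  intro i o
  cases o with
  | none =>
    have h0 : Function.update s i none i = none := Function.update_self _ _ _
    simp only [cost, h0]
    exact le_top
  | some j =>
    by_cases hc : (t i - r j ≥ 0 ∧
        ¬ ∃ k, k ≠ i ∧ f k < f i ∧ Function.update s i (some j) k = some j ∧ t k - r j ≥ 0)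
    · have hjF : j ∈ Feas t r f i s := by
        refine ⟨hc.1, ?_⟩
        intro k hk hkj
        have hki : k ≠ i := fun h => by subst h; exact lt_irrefl _ hk
        exact hc.2 ⟨k, hki, hk, by rw [Function.update_of_ne hki]; exact hkj, hassign k j hkj⟩
      rcases (hs i).1 ⟨j, hjF⟩ with ⟨j0, hj0F, hsi, hmin⟩
      have hci : cost t r f i s = ((f i * (t i - r j0) : ℝ) : WithTop ℝ) := by
        simp only [cost, hsi]
        rw [if_pos]
        refine ⟨hj0F.1, ?_⟩
        rintro ⟨k, hki, hk, hkj, _⟩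
        exact hj0F.2 k hk hkj
      have hcd : cost t r f i (Function.update s i (some j))
          = ((f i * (t i - r j) : ℝ) : WithTop ℝ) := by
        simp only [cost, Function.update_self]
        rw [if_pos hc]
      rw [hci, hcd]
      exact_mod_cast hmin j hjF
    · have hT : cost t r f i (Function.update s i (some j)) = ⊤ := by
        simp only [cost, Function.update_self]
        rw [if_neg hc]
      rw [hT]
      exact le_top
end

section
/- Every parking instance admits a Nash equilibrium strategy profile: there exists a profile s : Fin n → Option (Fin m) such that for every agent i and every o : Option (Fin m), c i s ≤ c i (Function.update s i o). -/
lemma rank_lt {n : ℕ} (f : Fin n → ℝ) {k i : Fin n} (h : f k < f i) :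
    (Finset.univ.filter (fun a : Fin n => f a < f k)).card <
    (Finset.univ.filter (fun a : Fin n => f a < f i)).card := by
  apply Finset.card_lt_card
  constructor
  · intro x hx
    simp only [Finset.mem_filter, Finset.mem_univ, true_and] at *
    exact lt_trans hx h
  · intro hsub
    have := hsub (Finset.mem_filter.mpr ⟨Finset.mem_univ _, h⟩)
    simp at this

noncomputable def greedy {n m : ℕ} (t : Fin n → ℝ) (r : Fin m → ℝ) (f : Fin n → ℝ) :
    Fin n → Option (Fin m) :=
  WellFounded.fix
    (measure fun i : Fin n => (Finset.univ.filter (fun a : Fin n => f a < f i)).card).wf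
    (fun i G =>
      if h : (Finset.univ.filter (fun j : Fin m =>
          0 ≤ t i - r j ∧ ∀ k, ∀ hk : f k < f i, G k (rank_lt f hk) ≠ some j)).Nonempty
      then some (Classical.choose (Finset.exists_max_image _ r h))
      else none)

lemma greedy_eq {n m : ℕ} (t : Fin n → ℝ) (r : Fin m → ℝ) (f : Fin n → ℝ) (i : Fin n) :
    greedy t r f i =
      if h : (Finset.univ.filter (fun j : Fin m =>
          0 ≤ t i - r j ∧ ∀ k, f k < f i → greedy t r f k ≠ some j)).Nonempty
      then some (Classical.choose (Finset.exists_max_image _ r h))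
      else none := by
  rw [greedy, WellFounded.fix_eq]

lemma greedy_some_spec {n m : ℕ} {t : Fin n → ℝ} {r : Fin m → ℝ} {f : Fin n → ℝ}
    {i : Fin n} {j : Fin m} (h : greedy t r f i = some j) :
    (0 ≤ t i - r j ∧ ∀ k, f k < f i → greedy t r f k ≠ some j) ∧
    ∀ j', 0 ≤ t i - r j' → (∀ k, f k < f i → greedy t r f k ≠ some j') → r j' ≤ r j := by
  rw [greedy_eq] at h
  by_cases hne : (Finset.univ.filter (fun j : Fin m =>
      0 ≤ t i - r j ∧ ∀ k, f k < f i → greedy t r f k ≠ some j)).Nonempty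
  · rw [dif_pos hne] at h
    have hspec := Classical.choose_spec (Finset.exists_max_image _ r hne)
    rw [Option.some.inj h] at hspec
    obtain ⟨hmem, hmax⟩ := hspec
    simp only [Finset.mem_filter, Finset.mem_univ, true_and] at hmem hmax
    exact ⟨hmem, fun j' h1 h2 => hmax j' ⟨h1, h2⟩⟩
  · rw [dif_neg hne] at h
    exact absurd h (by simp)

lemma greedy_none_spec {n m : ℕ} {t : Fin n → ℝ} {r : Fin m → ℝ} {f : Fin n → ℝ}
    {i : Fin n} (h : greedy t r f i = none) (j : Fin m) (hj : 0 ≤ t i - r j) :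
    ∃ k, f k < f i ∧ greedy t r f k = some j := by
  rw [greedy_eq] at h
  split at h
  · exact absurd h (by simp)
  · next hne =>
    rw [Finset.not_nonempty_iff_eq_empty, Finset.eq_empty_iff_forall_notMem] at hne
    have := hne j
    simp only [Finset.mem_filter, Finset.mem_univ, true_and, not_and, not_forall] at this
    obtain ⟨k, hk, hkj⟩ := this hj
    exact ⟨k, hk, not_not.mp hkj⟩


/-- every parking instance admits a Nash equilibrium profile. -/
theorem exists_nashEq {n m : ℕ} (t : Fin n → ℝ) (r : Fin m → ℝ) (f : Fin n → ℝ)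
    (hf_inj : Function.Injective f) (hf_bd : ∀ i, 0 ≤ f i ∧ f i ≤ 1) :
    ∃ s : Fin n → Option (Fin m), ∀ (i : Fin n) (o : Option (Fin m)),
      cost t r f i s ≤ cost t r f i (Function.update s i o) := by
  refine ⟨greedy t r f, fun i o => ?_⟩
  set s := greedy t r f with hs
  -- key: any assigned agent can feasibly reach its slot
  have hreach : ∀ k j', s k = some j' → 0 ≤ t k - r j' := fun k j' h =>
    (greedy_some_spec h).1.1
  cases hsi : s i with
  | none =>
    -- cost of i is ⊤; show deviation cost is also ⊤
    cases o with
    | none =>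
      simp [cost, Function.update_self]
    | some j' =>
      rw [cost]
      simp only [hsi]
      rw [cost]
      simp only [Function.update_self]
      split
      · next hcond =>
        obtain ⟨h1, h2⟩ := hcond
        obtain ⟨k, hk, hkj⟩ := greedy_none_spec hsi j' h1
        exfalso
        apply h2
        refine ⟨k, fun he => absurd (congrArg f he) (ne_of_lt hk), hk, ?_, hreach k j' hkj⟩
        rw [Function.update_of_ne (fun he => absurd (congrArg f he) (ne_of_lt hk))]
        exact hkj
      · exact le_refl _
  | some j =>
    obtain ⟨⟨hfeas, hnolow⟩, hmax⟩ := greedy_some_spec hsi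
    -- cost of i is finite
    have hcost : cost t r f i s = ((f i * (t i - r j) : ℝ) : WithTop ℝ) := by
      rw [cost]
      simp only [hsi]
      rw [if_pos]
      refine ⟨hfeas, ?_⟩
      rintro ⟨k, hki, hfk, hkj, -⟩
      exact hnolow k hfk hkj
    rw [hcost]
    cases o with
    | none =>
      rw [cost]
      simp [Function.update_self]
    | some j' =>
      rw [cost]
      simp only [Function.update_self]
      split
      · next hcond =>
        obtain ⟨h1, h2⟩ := hcond
        -- j' is feasible and unclaimed by lower agents, so r j' ≤ r j
        have hun : ∀ k, f k < f i → s k ≠ some j' := by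
          intro k hfk hkj
          have hki : k ≠ i := fun he => absurd (congrArg f he) (ne_of_lt hfk)
          exact h2 ⟨k, hki, hfk, by rwa [Function.update_of_ne hki], hreach k j' hkj⟩
        have hr : r j' ≤ r j := hmax j' h1 hun
        exact_mod_cast mul_le_mul_of_nonneg_left (by linarith) (hf_bd i).1
      · exact le_top
end

section
/- Let s be a strategy profile of a parking instance satisfying the greedy-by-resilience invariant, let i be an agent and let j be a slot with j ∉ F i s. Then c i (Function.update s i (some j)) = ⊤. In particular, if F i s = ∅ (so s i = none), every unilateral deviation of agent i has cost ⊤. -/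
/-- under the greedy-by-resilience invariant, deviating to a slot
outside `F i s` has cost `⊤`; in particular if `F i s = ∅` every unilateral
deviation of agent `i` has cost `⊤`. -/
theorem cost_update_eq_top_of_not_mem_feas {n m : ℕ} (t : Fin n → ℝ) (r : Fin m → ℝ)
    (f : Fin n → ℝ) (hf_inj : Function.Injective f) (hf_bd : ∀ i, 0 ≤ f i ∧ f i ≤ 1)
    (s : Fin n → Option (Fin m)) (hs : GreedyInv t r f s)
    (i : Fin n) (j : Fin m) (hj : j ∉ Feas t r f i s) :
    cost t r f i (Function.update s i (some j)) = ⊤ ∧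
      (Feas t r f i s = ∅ →
        ∀ o : Option (Fin m), cost t r f i (Function.update s i o) = ⊤) := by
  classical
  have key : ∀ j : Fin m, j ∉ Feas t r f i s →
      cost t r f i (Function.update s i (some j)) = ⊤ := by
    intro j hj
    unfold cost
    rw [Function.update_self]
    simp only
    rw [if_neg]
    intro ⟨h1, h2⟩
    apply h2
    simp only [Feas, Set.mem_setOf_eq, not_and, not_forall] at hj
    obtain ⟨k, hk, hkj⟩ := hj h1
    rw [not_not] at hkj
    have hki : k ≠ i := by
      intro h; subst h; exact lt_irrefl _ hk
    refine ⟨k, hki, hk, by rw [Function.update_of_ne hki]; exact hkj, ?_⟩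
    -- from greedy invariant, s k = some j implies j ∈ Feas k s
    by_cases hne : (Feas t r f k s).Nonempty
    · obtain ⟨j', hj', hsk, _⟩ := (hs k).1 hne
      rw [hkj] at hsk
      have : j = j' := by injection hsk
      subst this
      exact hj'.1
    · exfalso
      have : Feas t r f k s = ∅ := Set.not_nonempty_iff_eq_empty.mp hne
      have := (hs k).2 this
      rw [this] at hkj
      exact Option.noConfusion rfl (heq_of_eq hkj)
  refine ⟨key j hj, fun hemp o => ?_⟩
  cases o with
  | none => unfold cost; rw [Function.update_self]
  | some j' =>
    exact key j' (by rw [hemp]; exact Set.notMem_empty j')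
end
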